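/- Let α > 0, ρ > 0, η, κ, β ∈ ℝ, p, q > 1 with 1/p + 1/q = 1, and 0 ≤ a < x. Let f, g be two positive functions on [a,x] such that I f^p(x), I f^q(x), I g^p(x), I g^q(x) are all finite, where I denotes the generalized fractional integral ρI^{α,β}_{a+,η,κ}. If there exist real constants 0 < m ≤ M such that m ≤ f(t)/g(t) ≤ M for all t ∈ [a,x], then I(fg)(x) ≤ c₃ · I(f^p + g^p)(x) + c₄ · I(f^q + g^q)(x), where c₃ = 2^(p−1) M^p / (p (M+1)^p) and c₄ = 2^(q−1) / (q (m+1)^q). -/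

import Mathlib

open MeasureTheory
open scoped NNReal

-- real version of (a+b)^p ≤ 2^(p-1)(a^p+b^p)
lemma real_two_pow_ineq {a b p : ℝ} (ha : 0 ≤ a) (hb : 0 ≤ b) (hp : 1 ≤ p) :
    (a + b) ^ p ≤ (2 : ℝ) ^ (p - 1) * (a ^ p + b ^ p) := by
  have := NNReal.rpow_add_le_mul_rpow_add_rpow a.toNNReal b.toNNReal hp
  have h2 : ((a.toNNReal + b.toNNReal : ℝ≥0) : ℝ) = a + b := by
    simp [Real.coe_toNNReal _ ha, Real.coe_toNNReal _ hb]
  calc (a + b) ^ p = ((a.toNNReal + b.toNNReal : ℝ≥0) : ℝ) ^ p := by rw [h2]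
    _ = (((a.toNNReal + b.toNNReal) ^ p : ℝ≥0) : ℝ) := by rw [NNReal.coe_rpow]
    _ ≤ (((2 : ℝ≥0) ^ (p-1) * (a.toNNReal ^ p + b.toNNReal ^ p) : ℝ≥0) : ℝ) := by
        exact_mod_cast this
    _ = (2 : ℝ) ^ (p - 1) * (a ^ p + b ^ p) := by
        push_cast [Real.coe_toNNReal _ ha, Real.coe_toNNReal _ hb]
        ring

lemma ptwise {p q m M F G : ℝ} (hp : 1 < p) (hq : 1 < q) (hpq : 1 / p + 1 / q = 1)
    (hm : 0 < m) (hmM : m ≤ M) (hF : 0 < F) (hG : 0 < G)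
    (hb1 : m ≤ F / G) (hb2 : F / G ≤ M) :
    F * G ≤ ((2 : ℝ) ^ (p - 1) * M ^ p / (p * (M + 1) ^ p)) * (F ^ p + G ^ p)
      + ((2 : ℝ) ^ (q - 1) / (q * (m + 1) ^ q)) * (F ^ q + G ^ q) := by
  have hM : 0 < M := hm.trans_le hmM
  have hconj : p.HolderConjugate q := ⟨by rw [inv_one, ← one_div, ← one_div]; exact hpq, by linarith, by linarith⟩
  have young := Real.young_inequality_of_nonneg hF.le hG.le hconj
  -- F ≤ M/(M+1)*(F+G)
  have hFle : F ≤ M / (M + 1) * (F + G) := by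
    rw [div_mul_eq_mul_div, le_div_iff₀ (by linarith)]
    have : F ≤ M * G := (div_le_iff₀ hG).mp hb2
    nlinarith
  have hGle : G ≤ 1 / (m + 1) * (F + G) := by
    rw [div_mul_eq_mul_div, le_div_iff₀ (by linarith)]
    have : m * G ≤ F := (le_div_iff₀ hG).mp hb1
    nlinarith
  have hFp : F ^ p ≤ (M / (M + 1)) ^ p * (F + G) ^ p := by
    calc F ^ p ≤ (M / (M + 1) * (F + G)) ^ p :=
          Real.rpow_le_rpow hF.le hFle (by positivity)
      _ = (M / (M + 1)) ^ p * (F + G) ^ p :=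
          Real.mul_rpow (by positivity) (by positivity)
  have hGq : G ^ q ≤ (1 / (m + 1)) ^ q * (F + G) ^ q := by
    calc G ^ q ≤ (1 / (m + 1) * (F + G)) ^ q :=
          Real.rpow_le_rpow hG.le hGle (by positivity)
      _ = (1 / (m + 1)) ^ q * (F + G) ^ q :=
          Real.mul_rpow (by positivity) (by positivity)
  have h2p := real_two_pow_ineq hF.le hG.le hp.le
  have h2q := real_two_pow_ineq hF.le hG.le hq.le
  have key1 : F ^ p / p ≤ ((2 : ℝ) ^ (p - 1) * M ^ p / (p * (M + 1) ^ p)) * (F ^ p + G ^ p) := by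
    have hMp : (M / (M + 1)) ^ p = M ^ p / (M + 1) ^ p :=
      Real.div_rpow hM.le (by positivity : (0:ℝ) ≤ M+1) p
    have hc : (0:ℝ) < (M + 1) ^ p := by positivity
    have hFG : (0:ℝ) ≤ (F + G) ^ p := by positivity
    have step : F ^ p ≤ M ^ p / (M + 1) ^ p * ((2:ℝ) ^ (p-1) * (F ^ p + G ^ p)) := by
      calc F ^ p ≤ (M / (M + 1)) ^ p * (F + G) ^ p := hFp
        _ = M ^ p / (M + 1) ^ p * (F + G) ^ p := by rw [hMp]
        _ ≤ M ^ p / (M + 1) ^ p * ((2:ℝ) ^ (p-1) * (F ^ p + G ^ p)) := by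
            apply mul_le_mul_of_nonneg_left h2p (by positivity)
    rw [div_le_iff₀ (by linarith : (0:ℝ) < p)] at *
    calc F ^ p ≤ M ^ p / (M + 1) ^ p * ((2:ℝ) ^ (p-1) * (F ^ p + G ^ p)) := step
      _ = (2 : ℝ) ^ (p - 1) * M ^ p / (p * (M + 1) ^ p) * (F ^ p + G ^ p) * p := by
          field_simp
  have key2 : G ^ q / q ≤ ((2 : ℝ) ^ (q - 1) / (q * (m + 1) ^ q)) * (F ^ q + G ^ q) := by
    have hmq : (1 / (m + 1)) ^ q = 1 / (m + 1) ^ q :=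
      by rw [Real.div_rpow zero_le_one (by positivity : (0:ℝ) ≤ m+1) q, Real.one_rpow]
    have step : G ^ q ≤ 1 / (m + 1) ^ q * ((2:ℝ) ^ (q-1) * (F ^ q + G ^ q)) := by
      calc G ^ q ≤ (1 / (m + 1)) ^ q * (F + G) ^ q := hGq
        _ = 1 / (m + 1) ^ q * (F + G) ^ q := by rw [hmq]
        _ ≤ 1 / (m + 1) ^ q * ((2:ℝ) ^ (q-1) * (F ^ q + G ^ q)) := by
            apply mul_le_mul_of_nonneg_left h2q (by positivity)
    rw [div_le_iff₀ (by linarith : (0:ℝ) < q)]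
    calc G ^ q ≤ 1 / (m + 1) ^ q * ((2:ℝ) ^ (q-1) * (F ^ q + G ^ q)) := step
      _ = (2 : ℝ) ^ (q - 1) / (q * (m + 1) ^ q) * (F ^ q + G ^ q) * q := by
          field_simp
  linarith


/-- The left-sided generalized (Katugampola) fractional integral
`ρI^{α,β}_{a+,η,κ} f (x)`. -/
noncomputable def katI (α ρ η κ β a x : ℝ) (f : ℝ → ℝ) : ℝ :=
  (ρ ^ (1 - β) * x ^ κ / Real.Gamma α) *
    ∫ t in a..x, t ^ (ρ * (η + 1) - 1) * (x ^ ρ - t ^ ρ) ^ (α - 1) * f t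

/-- Finiteness of the generalized fractional integral, expressed as integrability of the
kernel-weighted integrand. -/
def katIntegrable (α ρ η κ β a x : ℝ) (f : ℝ → ℝ) : Prop :=
  IntervalIntegrable
    (fun t => t ^ (ρ * (η + 1) - 1) * (x ^ ρ - t ^ ρ) ^ (α - 1) * f t)
    volume a x

/-- A product inequality via the generalized fractional integral. -/
theorem product_inequality_katugampola
    (α ρ η κ β p q m M a x : ℝ) (hα : 0 < α) (hρ : 0 < ρ)
    (hp : 1 < p) (hq : 1 < q) (hpq : 1 / p + 1 / q = 1)
    (ha : 0 ≤ a) (hax : a < x)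
    (f g : ℝ → ℝ)
    (hf_pos : ∀ t ∈ Set.Icc a x, 0 < f t)
    (hg_pos : ∀ t ∈ Set.Icc a x, 0 < g t)
    (hfp_int : katIntegrable α ρ η κ β a x (fun t => f t ^ p))
    (hfq_int : katIntegrable α ρ η κ β a x (fun t => f t ^ q))
    (hgp_int : katIntegrable α ρ η κ β a x (fun t => g t ^ p))
    (hgq_int : katIntegrable α ρ η κ β a x (fun t => g t ^ q))
    (hm : 0 < m) (hmM : m ≤ M)
    (hbound : ∀ t ∈ Set.Icc a x, m ≤ f t / g t ∧ f t / g t ≤ M) :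
    katI α ρ η κ β a x (fun t => f t * g t) ≤
      ((2 : ℝ) ^ (p - 1) * M ^ p / (p * (M + 1) ^ p)) *
          katI α ρ η κ β a x (fun t => f t ^ p + g t ^ p) +
        ((2 : ℝ) ^ (q - 1) / (q * (m + 1) ^ q)) *
          katI α ρ η κ β a x (fun t => f t ^ q + g t ^ q) := by
  set c₃ := (2 : ℝ) ^ (p - 1) * M ^ p / (p * (M + 1) ^ p) with hc₃
  set c₄ := (2 : ℝ) ^ (q - 1) / (q * (m + 1) ^ q) with hc₄
  have hM : 0 < M := hm.trans_le hmM
  have hc₃0 : 0 ≤ c₃ := by rw [hc₃]; positivity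
  have hc₄0 : 0 ≤ c₄ := by rw [hc₄]; positivity
  set K : ℝ → ℝ := fun t => t ^ (ρ * (η + 1) - 1) * (x ^ ρ - t ^ ρ) ^ (α - 1) with hK
  have hx0 : 0 < x := ha.trans_lt hax
  have hC : 0 ≤ ρ ^ (1 - β) * x ^ κ / Real.Gamma α := by
    have := Real.Gamma_pos_of_pos hα
    positivity
  have hKnn : ∀ t ∈ Set.Icc a x, 0 ≤ K t := by
    intro t ht
    have ht0 : 0 ≤ t := ha.trans ht.1
    have hsub : 0 ≤ x ^ ρ - t ^ ρ := by
      have := Real.rpow_le_rpow ht0 ht.2 hρ.le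
      linarith
    exact mul_nonneg (Real.rpow_nonneg ht0 _) (Real.rpow_nonneg hsub _)
  -- pointwise inequality on [a, x]
  have hpt : ∀ t ∈ Set.Icc a x,
      K t * (f t * g t) ≤ c₃ * (K t * (f t ^ p + g t ^ p)) + c₄ * (K t * (f t ^ q + g t ^ q)) := by
    intro t ht
    have h := ptwise hp hq hpq hm hmM (hf_pos t ht) (hg_pos t ht) (hbound t ht).1 (hbound t ht).2
    have hKt := hKnn t ht
    calc K t * (f t * g t)
        ≤ K t * (c₃ * (f t ^ p + g t ^ p) + c₄ * (f t ^ q + g t ^ q)) :=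
          mul_le_mul_of_nonneg_left h hKt
      _ = c₃ * (K t * (f t ^ p + g t ^ p)) + c₄ * (K t * (f t ^ q + g t ^ q)) := by ring
  -- integrability of combined integrands
  have hA : IntervalIntegrable (fun t => K t * (f t ^ p + g t ^ p)) volume a x := by
    have h := hfp_int.add hgp_int
    refine h.congr ?_
    intro t _; simp only [hK]; ring
  have hB : IntervalIntegrable (fun t => K t * (f t ^ q + g t ^ q)) volume a x := by
    have h := hfq_int.add hgq_int
    refine h.congr ?_
    intro t _; simp only [hK]; ring
  have hAB : IntervalIntegrable
      (fun t => c₃ * (K t * (f t ^ p + g t ^ p)) + c₄ * (K t * (f t ^ q + g t ^ q)))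
      volume a x := (hA.const_mul c₃).add (hB.const_mul c₄)
  have key : (∫ t in a..x, K t * (f t * g t)) ≤
      ∫ t in a..x, (c₃ * (K t * (f t ^ p + g t ^ p)) + c₄ * (K t * (f t ^ q + g t ^ q))) := by
    by_cases hI : IntervalIntegrable (fun t => K t * (f t * g t)) volume a x
    · exact intervalIntegral.integral_mono_on hax.le hI hAB hpt
    · rw [intervalIntegral.integral_undef hI]
      apply intervalIntegral.integral_nonneg hax.le
      intro t ht
      have hKt := hKnn t ht
      have h1 : 0 ≤ f t ^ p + g t ^ p := by
        have := (hf_pos t ht).le; have := (hg_pos t ht).le; positivity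
      have h2 : 0 ≤ f t ^ q + g t ^ q := by
        have := (hf_pos t ht).le; have := (hg_pos t ht).le; positivity
      positivity
  have hsplit : (∫ t in a..x, (c₃ * (K t * (f t ^ p + g t ^ p)) + c₄ * (K t * (f t ^ q + g t ^ q))))
      = c₃ * (∫ t in a..x, K t * (f t ^ p + g t ^ p))
        + c₄ * (∫ t in a..x, K t * (f t ^ q + g t ^ q)) := by
    rw [intervalIntegral.integral_add (hA.const_mul c₃) (hB.const_mul c₄),
      intervalIntegral.integral_const_mul, intervalIntegral.integral_const_mul]
  simp only [katI]
  have goal_eq : ∀ h : ℝ → ℝ,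
      (∫ t in a..x, t ^ (ρ * (η + 1) - 1) * (x ^ ρ - t ^ ρ) ^ (α - 1) * h t)
        = ∫ t in a..x, K t * h t := by
    intro h; congr 1
  rw [goal_eq (fun t => f t * g t), goal_eq (fun t => f t ^ p + g t ^ p),
    goal_eq (fun t => f t ^ q + g t ^ q)]
  have := key.trans_eq hsplit
  calc ρ ^ (1 - β) * x ^ κ / Real.Gamma α * ∫ t in a..x, K t * (f t * g t)
      ≤ ρ ^ (1 - β) * x ^ κ / Real.Gamma α *
        (c₃ * (∫ t in a..x, K t * (f t ^ p + g t ^ p))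
          + c₄ * (∫ t in a..x, K t * (f t ^ q + g t ^ q))) :=
        mul_le_mul_of_nonneg_left this hC
    _ = c₃ * (ρ ^ (1 - β) * x ^ κ / Real.Gamma α * ∫ t in a..x, K t * (f t ^ p + g t ^ p))
        + c₄ * (ρ ^ (1 - β) * x ^ κ / Real.Gamma α * ∫ t in a..x, K t * (f t ^ q + g t ^ q)) := by
        ring
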